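/- For the (15,11) binary Hamming code with generator matrix G, assuming its dual (the (15,4) simplex code) has weight enumerator x¹⁵ + 15x⁷y⁸, the number of singular 11 × 11 column-submatrices of G is 15·C(7,4) = 525, and the number of invertible 11 × 11 column-submatrices is C(15,11) − 525 = 840. -/

import Mathlib

open scoped Classical

/-- Hamming weight of a binary vector. -/
def wt {n : ℕ} (v : Fin n → ZMod 2) : ℕ :=
  (Finset.univ.filter (fun i => v i ≠ 0)).card

/-- The columns of `M` indexed by `S` are linearly independent over `F₂`. -/
def colsIndep {k n : ℕ} (M : Matrix (Fin k) (Fin n) (ZMod 2)) (S : Finset (Fin n)) : Prop :=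
  LinearIndependent (ZMod 2) (fun j : {x // x ∈ S} => fun i => M i j.val)

/-- support -/
def supp {n : ℕ} (v : Fin n → ZMod 2) : Finset (Fin n) :=
  Finset.univ.filter (fun i => v i ≠ 0)

lemma depend_iff {k n : ℕ} (M : Matrix (Fin k) (Fin n) (ZMod 2)) (S : Finset (Fin n)) :
    ¬ colsIndep M S ↔ ∃ v : Fin n → ZMod 2, v ≠ 0 ∧ M.mulVec v = 0 ∧ supp v ⊆ S := by
  rw [colsIndep, Fintype.not_linearIndependent_iff]
  constructor
  · rintro ⟨g, hg, j0, hj0⟩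
    refine ⟨fun j => if h : j ∈ S then g ⟨j, h⟩ else 0, ?_, ?_, ?_⟩
    · intro h0
      apply hj0
      have := congrFun h0 j0.val
      simpa [j0.prop] using this
    · funext i
      have := congrFun hg i
      simp only [Finset.sum_apply, Pi.smul_apply, smul_eq_mul, Pi.zero_apply] at this
      simp only [Matrix.mulVec, dotProduct, Pi.zero_apply]
      rw [← Finset.sum_subset (Finset.subset_univ S)
        (by intro j _ hj; simp [hj])]
      rw [← Finset.sum_attach S (fun j => M i j * if h : j ∈ S then g ⟨j, h⟩ else 0)]
      rw [← this]
      apply Finset.sum_congr rfl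
      intro j _
      simp [j.prop, mul_comm]
    · intro j hj
      simp only [supp, Finset.mem_filter] at hj
      by_contra h
      exact hj.2 (by simp [h])
  · rintro ⟨v, hv0, hker, hsupp⟩
    refine ⟨fun j => v j.val, ?_, ?_⟩
    · funext i
      have := congrFun hker i
      simp only [Matrix.mulVec, dotProduct, Pi.zero_apply] at this
      simp only [Finset.sum_apply, Pi.smul_apply, smul_eq_mul, Pi.zero_apply]
      rw [Finset.sum_coe_sort S (fun j => v j * M i j)]
      rw [← this]
      rw [Finset.sum_subset (Finset.subset_univ S)]
      · exact Finset.sum_congr rfl (fun j _ => mul_comm _ _)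
      · intro j _ hj
        have : v j = 0 := by
          by_contra h
          exact hj (hsupp (by simp [supp, h]))
        simp [this]
    · obtain ⟨j, hj⟩ := Function.ne_iff.mp hv0
      simp only [Pi.zero_apply] at hj
      exact ⟨⟨j, hsupp (by simp [supp, hj])⟩, hj⟩

lemma count_supersets {α : Type*} [Fintype α] [DecidableEq α] {m t : ℕ} (T : Finset α)
    (hT : T.card = t) (h : t ≤ m) :
    (((Finset.univ : Finset α).powersetCard m).filter (fun S => T ⊆ S)).card
      = (Fintype.card α - t).choose (m - t) := by
  have key : (((Finset.univ : Finset α).powersetCard m).filter (fun S => T ⊆ S)).card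
      = (Tᶜ.powersetCard (m - t)).card := by
    apply Finset.card_bij' (fun S _ => S \ T) (fun A _ => A ∪ T)
    · intro S hS
      simp only [Finset.mem_filter, Finset.mem_powersetCard] at hS
      rw [Finset.mem_powersetCard]
      constructor
      · intro x hx
        simp only [Finset.mem_sdiff] at hx
        simp [Finset.mem_compl, hx.2]
      · rw [Finset.card_sdiff_of_subset hS.2, hS.1.2, hT]
    · intro A hA
      rw [Finset.mem_powersetCard] at hA
      have hdisj : Disjoint A T := by
        intro x hxA hxT
        intro y hy
        have := hA.1 (hxA hy)
        simp only [Finset.mem_compl] at this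
        exact absurd (hxT hy) this
      simp only [Finset.mem_filter, Finset.mem_powersetCard]
      refine ⟨⟨Finset.subset_univ _, ?_⟩, Finset.subset_union_right⟩
      rw [Finset.card_union_of_disjoint hdisj, hA.2, hT]
      omega
    · intro S hS
      simp only [Finset.mem_filter] at hS
      exact Finset.sdiff_union_of_subset hS.2
    · intro A hA
      rw [Finset.mem_powersetCard] at hA
      apply Finset.union_sdiff_cancel_right
      intro x hxA hxT
      intro y hy
      have := hA.1 (hxA hy)
      simp only [Finset.mem_compl] at this
      exact absurd (hxT hy) this
  rw [key, Finset.card_powersetCard, Finset.card_compl, hT]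

lemma supp_card_eq_wt {n : ℕ} (v : Fin n → ZMod 2) : (supp v).card = wt v := rfl

lemma union_card_twelve (G : Matrix (Fin 11) (Fin 15) (ZMod 2))
    (hwt : ∀ v : Fin 15 → ZMod 2, v ≠ 0 → G.mulVec v = 0 → wt v = 8)
    (u v : Fin 15 → ZMod 2) (hu : u ≠ 0 ∧ G.mulVec u = 0) (hv : v ≠ 0 ∧ G.mulVec v = 0)
    (huv : u ≠ v) : (supp u ∪ supp v).card = 12 := by
  have hadd0 : u + v ≠ 0 := by
    intro h
    apply huv
    funext j
    have := congrFun h j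
    simp only [Pi.add_apply, Pi.zero_apply] at this
    have : ∀ a b : ZMod 2, a + b = 0 → a = b := by decide
    exact this _ _ (by have := congrFun h j; simpa using this)
  have hker : G.mulVec (u + v) = 0 := by
    rw [Matrix.mulVec_add, hu.2, hv.2, add_zero]
  have h8 : wt (u + v) = 8 := hwt _ hadd0 hker
  have hud : supp (u + v) = (supp u ∪ supp v) \ (supp u ∩ supp v) := by
    ext j
    simp only [supp, Finset.mem_filter, Finset.mem_univ, true_and, Finset.mem_sdiff,
      Finset.mem_union, Finset.mem_inter, Pi.add_apply]
    have : ∀ a b : ZMod 2, (a + b ≠ 0) ↔ ((a ≠ 0 ∨ b ≠ 0) ∧ ¬(a ≠ 0 ∧ b ≠ 0)) := by decide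
    exact this _ _
  have hcd : (supp (u+v)).card
      = (supp u ∪ supp v).card - (supp u ∩ supp v).card := by
    rw [hud, Finset.card_sdiff_of_subset]
    intro x hx
    simp only [Finset.mem_inter] at hx
    exact Finset.mem_union_left _ hx.1
  have hui : (supp u ∪ supp v).card + (supp u ∩ supp v).card = 16 := by
    rw [Finset.card_union_add_card_inter, supp_card_eq_wt, supp_card_eq_wt,
      hwt u hu.1 hu.2, hwt v hv.1 hv.2]
  have hle : (supp u ∩ supp v).card ≤ (supp u ∪ supp v).card :=
    Finset.card_le_card (fun x hx => Finset.mem_union_left _ (Finset.mem_inter.mp hx).1)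
  rw [supp_card_eq_wt, h8] at hcd
  omega

/-- Let `G` be a full-rank `11 × 15` binary generator matrix of the (15,11)
Hamming code, whose dual (the (15,4) simplex code, `{v : G·v = 0}`) has weight enumerator
`x¹⁵ + 15x⁷y⁸` (all 15 nonzero dual codewords have weight 8). Then `G` has exactly
`15·C(7,4) = 525` singular `11 × 11` column-submatrices and `C(15,11) − 525 = 840`
invertible ones. -/
theorem stmt_19 (G : Matrix (Fin 11) (Fin 15) (ZMod 2)) (hrank : G.rank = 11)
    (hwt : ∀ v : Fin 15 → ZMod 2, v ≠ 0 → G.mulVec v = 0 → wt v = 8)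
    (hcard : ((Finset.univ : Finset (Fin 15 → ZMod 2)).filter
      (fun v => v ≠ 0 ∧ G.mulVec v = 0)).card = 15) :
    ((Finset.univ.powersetCard 11).filter (fun S => ¬ colsIndep G S)).card = 525 ∧
    ((Finset.univ.powersetCard 11).filter (fun S => colsIndep G S)).card = 840 := by
  set K := ((Finset.univ : Finset (Fin 15 → ZMod 2)).filter
      (fun v => v ≠ 0 ∧ G.mulVec v = 0)) with hK
  have hbad : ((Finset.univ.powersetCard 11).filter (fun S => ¬ colsIndep G S))
      = K.biUnion (fun v => (Finset.univ.powersetCard 11).filter (fun S => supp v ⊆ S)) := by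
    ext S
    simp only [Finset.mem_biUnion, Finset.mem_filter, hK, Finset.mem_univ, true_and]
    constructor
    · rintro ⟨hS, hdep⟩
      obtain ⟨v, hv0, hker, hsupp⟩ := (depend_iff G S).mp hdep
      exact ⟨v, ⟨hv0, hker⟩, hS, hsupp⟩
    · rintro ⟨v, ⟨hv0, hker⟩, hS, hsupp⟩
      exact ⟨hS, (depend_iff G S).mpr ⟨v, hv0, hker, hsupp⟩⟩
  have hdisj : ∀ u ∈ K, ∀ v ∈ K, u ≠ v →
      Disjoint ((Finset.univ.powersetCard 11).filter (fun S => supp u ⊆ S))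
        ((Finset.univ.powersetCard 11).filter (fun S => supp v ⊆ S)) := by
    intro u hu v hv huv
    rw [Finset.disjoint_left]
    intro S hSu hSv
    simp only [Finset.mem_filter, Finset.mem_powersetCard_univ] at hSu hSv
    simp only [hK, Finset.mem_filter, Finset.mem_univ, true_and] at hu hv
    have h12 := union_card_twelve G hwt u v hu hv huv
    have : (supp u ∪ supp v).card ≤ S.card :=
      Finset.card_le_card (Finset.union_subset hSu.2 hSv.2)
    rw [hSu.1, h12] at this
    omega
  have hbadcard : ((Finset.univ.powersetCard 11).filter (fun S => ¬ colsIndep G S)).card = 525 := by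
    rw [hbad, Finset.card_biUnion hdisj]
    have hterm : ∀ v ∈ K,
        ((Finset.univ.powersetCard 11).filter (fun S => supp v ⊆ S)).card = 35 := by
      intro v hv
      simp only [hK, Finset.mem_filter, Finset.mem_univ, true_and] at hv
      have := count_supersets (supp v) (by rw [supp_card_eq_wt, hwt v hv.1 hv.2])
        (by norm_num : (8:ℕ) ≤ 11)
      simpa [show Nat.choose 7 3 = 35 by rfl] using this
    rw [Finset.sum_congr rfl hterm, Finset.sum_const, hcard]
    rfl
  refine ⟨hbadcard, ?_⟩
  have htot := Finset.card_filter_add_card_filter_not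
    (s := (Finset.univ : Finset (Fin 15)).powersetCard 11) (p := fun S => colsIndep G S)
  have hpc : ((Finset.univ : Finset (Fin 15)).powersetCard 11).card = 1365 := by
    rw [Finset.card_powersetCard]
    simp [Finset.card_univ]
    decide
  omega
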